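/- For all integers n and d with 1 < d ≤ n/2, there exists a Boolean function f : {0,1}^n → {0,1} that is computed by some deterministic OBDD of width at most d but by no deterministic OBDD of width at most d − 1; consequently the class of functions computed by deterministic OBDDs of width at most d − 1 is strictly contained in the class computed by deterministic OBDDs of width at most d. -/

import Mathlib

/-- Number of 1s in a binary string ν ∈ {0,1}^n. -/
def countOnes {n : ℕ} (ν : Fin n → Bool) : ℕ :=
  (Finset.univ.filter (fun i => ν i = true)).card

/-- Number of 0s in a binary string ν ∈ {0,1}^n. -/
def countZeros {n : ℕ} (ν : Fin n → Bool) : ℕ :=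
  (Finset.univ.filter (fun i => ν i = false)).card

/-- Number of 1s among the first `k` bits. -/
def countOnesFirst (k : ℕ) {n : ℕ} (ν : Fin n → Bool) : ℕ :=
  (Finset.univ.filter (fun i : Fin n => (i : ℕ) < k ∧ ν i = true)).card

/-- Number of 0s among the first `k` bits. -/
def countZerosFirst (k : ℕ) {n : ℕ} (ν : Fin n → Bool) : ℕ :=
  (Finset.univ.filter (fun i : Fin n => (i : ℕ) < k ∧ ν i = false)).card

/-- A deterministic OBDD of width `d` on `n` Boolean variables. -/
structure DOBDD (n d : ℕ) where
  ord : Equiv.Perm (Fin n)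
  T : Fin n → Bool → Fin d → Fin d
  start : Fin d
  Accept : Finset (Fin d)

/-- The node reached by a deterministic OBDD after reading all input bits. -/
def DOBDD.run {n d : ℕ} (M : DOBDD n d) (ν : Fin n → Bool) : Fin d :=
  (List.finRange n).foldl (fun v j => M.T j (ν (M.ord j)) v) M.start

def DOBDD.accepts {n d : ℕ} (M : DOBDD n d) (ν : Fin n → Bool) : Prop :=
  M.run ν ∈ M.Accept

/-- A deterministic OBDD computes a total Boolean function. -/
def DOBDD.computes {n d : ℕ} (M : DOBDD n d) (f : (Fin n → Bool) → Bool) : Prop :=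
  ∀ ν, M.accepts ν ↔ f ν = true

/-- A nondeterministic OBDD of width `d` on `n` Boolean variables. -/
structure NOBDD (n d : ℕ) where
  ord : Equiv.Perm (Fin n)
  T : Fin n → Bool → Fin d → Set (Fin d)
  start : Fin d
  Accept : Finset (Fin d)

/-- The set of nodes reachable by a nondeterministic OBDD after reading all input bits. -/
def NOBDD.reach {n d : ℕ} (M : NOBDD n d) (ν : Fin n → Bool) : Set (Fin d) :=
  (List.finRange n).foldl (fun S j => {w | ∃ v ∈ S, w ∈ M.T j (ν (M.ord j)) v}) {M.start}

def NOBDD.accepts {n d : ℕ} (M : NOBDD n d) (ν : Fin n → Bool) : Prop :=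
  ∃ v ∈ M.reach ν, v ∈ M.Accept

/-- A nondeterministic OBDD computes a total Boolean function. -/
def NOBDD.computes {n d : ℕ} (M : NOBDD n d) (f : (Fin n → Bool) → Bool) : Prop :=
  ∀ ν, M.accepts ν ↔ f ν = true

/-- The class of Boolean functions on n variables computed by deterministic
OBDDs of width at most `w`. -/
def OBDDclass (n w : ℕ) : Set ((Fin n → Bool) → Bool) :=
  {f | ∃ d, d ≤ w ∧ ∃ M : DOBDD n d, M.computes f}

/-- The class of Boolean functions on n variables computed by nondeterministic
OBDDs of width at most `w`. -/
def NOBDDclass (n w : ℕ) : Set ((Fin n → Bool) → Bool) :=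
  {f | ∃ d, d ≤ w ∧ ∃ M : NOBDD n d, M.computes f}

/-- Final probability distribution of a stable probabilistic OBDD given by the pair of
left-stochastic matrices `A`, variable order `ord`, and initial node `s`. -/
noncomputable def stableProbRun {n d : ℕ} (A : Bool → Matrix (Fin d) (Fin d) ℝ)
    (ord : Equiv.Perm (Fin n)) (s : Fin d) (ν : Fin n → Bool) : Fin d → ℝ :=
  (List.finRange n).foldl (fun v j => (A (ν (ord j))).mulVec v)
    (fun i => if i = s then 1 else 0)

/-- Final quantum state of a stable ID quantum OBDD given by the pair of matrices `U`
and the initial computational-basis state `q0`, reading bits in the natural order. -/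
noncomputable def quantumRunStable {n d : ℕ} (U : Bool → Matrix (Fin d) (Fin d) ℂ) (q0 : Fin d)
    (ν : Fin n → Bool) : Fin d → ℂ :=
  (List.finRange n).foldl (fun ψ j => (U (ν j)).mulVec ψ)
    (fun i => if i = q0 then 1 else 0)

/-- A quantum OBDD of width `d` on `n` Boolean variables. -/
structure QOBDD (n d : ℕ) where
  ord : Equiv.Perm (Fin n)
  U : Fin n → Bool → Matrix (Fin d) (Fin d) ℂ
  unitary : ∀ j b, U j b ∈ Matrix.unitaryGroup (Fin d) ℂ
  q0 : Fin d
  Accept : Finset (Fin d)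

/-- The final state of a quantum OBDD on input ν. -/
noncomputable def QOBDD.finalState {n d : ℕ} (M : QOBDD n d) (ν : Fin n → Bool) : Fin d → ℂ :=
  (List.finRange n).foldl (fun ψ j => (M.U j (ν (M.ord j))).mulVec ψ)
    (fun i => if i = M.q0 then 1 else 0)

/-- The acceptance probability of a quantum OBDD on input ν. -/
noncomputable def QOBDD.acceptProb {n d : ℕ} (M : QOBDD n d) (ν : Fin n → Bool) : ℝ :=
  ∑ i ∈ M.Accept, Complex.normSq (M.finalState ν i)

/-- `NotO_n(ν) = 0` iff `#0(ν) = #1(ν)`. -/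
def NotO (n : ℕ) (ν : Fin n → Bool) : Bool := !decide (countZeros ν = countOnes ν)

/-- `NotSQUARE_n(ν) = 0` iff `(#0(ν))² = #1(ν)`. -/
def NotSQUARE (n : ℕ) (ν : Fin n → Bool) : Bool := !decide ((countZeros ν) ^ 2 = countOnes ν)

/-- `NotPOWER_n(ν) = 0` iff `2^{#0(ν)} = #1(ν)`. -/
def NotPOWER (n : ℕ) (ν : Fin n → Bool) : Bool := !decide (2 ^ (countZeros ν) = countOnes ν)

/-- `MOD^k_n(ν) = 1` iff `#1(ν) ≡ 0 (mod k)`. -/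
def MODf (n k : ℕ) (ν : Fin n → Bool) : Bool := decide (countOnes ν % k = 0)

/-- `NotO^k_n(ν) = 0` iff `#^k_0(ν) = #^k_1(ν) = k/2`. -/
def NotOk (n k : ℕ) (ν : Fin n → Bool) : Bool :=
  !decide (countZerosFirst k ν = k / 2 ∧ countOnesFirst k ν = k / 2)

/-- The ordered subsequence of value bits `ν_{2i}` (1-indexed, `1 ≤ i ≤ k/2`) whose
marker bit `ν_{2i-1}` equals `b`; `b = false` gives `α(ν)` and `b = true` gives `β(ν)`. -/
def valueSubseq {n : ℕ} (k : ℕ) (b : Bool) (ν : Fin n → Bool) : List Bool :=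
  (List.range (k / 2)).filterMap (fun j =>
    if h : 2 * j + 1 < n then
      if ν ⟨2 * j, by omega⟩ = b then some (ν ⟨2 * j + 1, h⟩) else none
    else none)

/-- `EQS^k_n(ν) = 1` iff `α(ν) = β(ν)`. -/
def EQS (n k : ℕ) (ν : Fin n → Bool) : Bool :=
  decide (valueSubseq k false ν = valueSubseq k true ν)

/-- `NotEQS^k_n(ν) = 1 - EQS^k_n(ν)`. -/
def NotEQS (n k : ℕ) (ν : Fin n → Bool) : Bool := !(EQS n k ν)

open Fin.NatCast

private lemma WH.foldAdd {α : Type*} {e : ℕ} (p : α → Bool) : ∀ (l : List α) (v : Fin (e+1)),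
    List.foldl (fun v j => v + (if p j then 1 else 0)) v l = v + ((l.countP p : ℕ) : Fin (e+1)) := by
  intro l
  induction l with
  | nil => simp
  | cons a l ih =>
    intro v
    simp only [List.foldl_cons, ih, List.countP_cons]
    push_cast
    rcases h : p a <;> simp [h, add_comm, add_assoc, add_left_comm]

private lemma WH.countP_finRange (n : ℕ) (p : Fin n → Bool) :
    (List.finRange n).countP p = (Finset.univ.filter (fun j => p j = true)).card := by
  rw [Fin.univ_def]
  simp [Finset.filter, Finset.card, List.countP_eq_length_filter, Multiset.filter_coe]

private lemma WH.filterval (n : ℕ) (P : ℕ → Prop) [DecidablePred P] :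
    (Finset.univ.filter (fun j : Fin n => P j.val)).card = ((Finset.range n).filter P).card := by
  apply Finset.card_bij (fun j _ => j.val)
  · intro a ha; simp at ha ⊢; exact ha
  · intro a _ b _ h; exact Fin.ext h
  · intro b hb; simp at hb; exact ⟨⟨b, hb.1⟩, by simp [hb.2], rfl⟩

private lemma WH.permcount (n : ℕ) (σ : Equiv.Perm (Fin n)) (r : Fin n → Bool) :
    (Finset.univ.filter (fun x => r (σ.symm x) = true)).card
      = (Finset.univ.filter (fun j => r j = true)).card := by
  apply Finset.card_bij (fun x _ => σ.symm x)
  · intro a ha; simp at ha ⊢; exact ha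
  · intro a _ b _ h; exact σ.symm.injective h
  · intro b hb; simp at hb ⊢; exact ⟨σ b, by simp [hb]⟩

private lemma WH.rangecard (n d i m : ℕ) (hi : i ≤ d) (hm : d + m ≤ n) :
    ((Finset.range n).filter (fun x => x < i ∨ (d ≤ x ∧ x < d + m))).card = i + m := by
  have h : (Finset.range n).filter (fun x => x < i ∨ (d ≤ x ∧ x < d + m))
      = Finset.range i ∪ Finset.Ico d (d + m) := by
    ext x; simp; omega
  rw [h, Finset.card_union_of_disjoint (by simp [Finset.disjoint_left]; omega)]
  simp

private lemma WH.mem_take {n d : ℕ} (j : Fin n) (h : j ∈ (List.finRange n).take d) : j.val < d := by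
  obtain ⟨i, hi, rfl⟩ := List.mem_iff_getElem.mp h
  simp at hi ⊢; omega

private lemma WH.mem_drop {n d : ℕ} (j : Fin n) (h : j ∈ (List.finRange n).drop d) : d ≤ j.val := by
  obtain ⟨i, hi, rfl⟩ := List.mem_iff_getElem.mp h
  simp at hi ⊢

/-- For all `n, d` with `1 < d ≤ n/2`, there is a Boolean function computed by a deterministic
OBDD of width at most `d` but by none of width at most `d - 1`; consequently
`OBDD^{d-1} ⊊ OBDD^d`. -/
theorem deterministic_width_hierarchy (n d : ℕ) (h1 : 1 < d) (h2 : d ≤ n / 2) :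
    (∃ f : (Fin n → Bool) → Bool, f ∈ OBDDclass n d ∧ f ∉ OBDDclass n (d - 1)) ∧
    OBDDclass n (d - 1) ⊂ OBDDclass n d := by
  have hn : 2 * d ≤ n := by
    have := Nat.div_mul_le_self n 2
    omega
  obtain ⟨e, rfl⟩ : ∃ e, d = e + 1 := ⟨d - 1, by omega⟩
  -- the separating function
  set f : (Fin n → Bool) → Bool := MODf n (e+1) with hf
  -- count for explicit inputs
  have key : f ∈ OBDDclass n (e+1) ∧ f ∉ OBDDclass n e := by
    constructor
    · -- upper bound: counter mod (e+1)
      refine ⟨e+1, le_refl _, ⟨Equiv.refl _, fun _ b v => v + (if b then 1 else 0), 0, {0}⟩, ?_⟩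
      intro ν
      have hrun : DOBDD.run ⟨Equiv.refl _, fun _ b v => v + (if b then 1 else 0), 0, {0}⟩ ν
          = ((countOnes ν : ℕ) : Fin (e+1)) := by
        show List.foldl (fun v j => v + (if ν ((Equiv.refl (Fin n)) j) then 1 else 0)) 0
            (List.finRange n) = _
        show List.foldl (fun v j => v + (if ν j then 1 else 0)) 0 (List.finRange n) = _
        rw [WH.foldAdd, zero_add, WH.countP_finRange]
        rfl
      show _ ∈ _ ↔ _
      rw [hrun]
      simp only [hf, MODf, Finset.mem_singleton, decide_eq_true_eq]
      rw [Fin.ext_iff]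
      simp [Fin.val_natCast]
    · -- lower bound
      rintro ⟨d', hd', M, hM⟩
      -- explicit inputs
      set r : ℕ → ℕ → Fin n → Bool :=
        fun i m j => decide (j.val < i ∨ ((e+1) ≤ j.val ∧ j.val < (e+1) + m)) with hr
      set inp : ℕ → ℕ → Fin n → Bool := fun i m x => r i m (M.ord.symm x) with hinp
      have hcount : ∀ i m, i ≤ e + 1 → (e+1) + m ≤ n → countOnes (inp i m) = i + m := by
        intro i m hi hm
        show (Finset.univ.filter (fun x => r i m (M.ord.symm x) = true)).card = i + m
        rw [WH.permcount]
        have : (Finset.univ.filter (fun j => r i m j = true)).card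
            = (Finset.univ.filter (fun j : Fin n =>
                j.val < i ∨ ((e+1) ≤ j.val ∧ j.val < (e+1) + m))).card := by
          congr 1
          apply Finset.filter_congr
          intro x _
          simp [hr]
        rw [this, WH.filterval n (fun v => v < i ∨ ((e+1) ≤ v ∧ v < (e+1) + m)),
          WH.rangecard n (e+1) i m hi hm]
      -- mid states
      set F : Fin (e+1) → Fin d' := fun i =>
        ((List.finRange n).take (e+1)).foldl (fun v j => M.T j (r i.val 0 j) v) M.start with hF
      obtain ⟨x, y, hxy, hFxy⟩ := Fintype.exists_ne_map_eq_of_card_lt F (by simp; omega)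
      set m : ℕ := (e + 1) - x.val with hm
      -- run decomposition
      have hsplit : ∀ i : ℕ, i ≤ e + 1 → M.run (inp i m)
          = ((List.finRange n).drop (e+1)).foldl (fun v j => M.T j (r i m j) v)
              (((List.finRange n).take (e+1)).foldl (fun v j => M.T j (r i 0 j) v) M.start) := by
        intro i hi
        have hdec : List.finRange n
            = (List.finRange n).take (e+1) ++ (List.finRange n).drop (e+1) :=
          (List.take_append_drop _ _).symm
        show List.foldl (fun v j => M.T j (inp i m (M.ord j)) v) M.start (List.finRange n) = _
        conv_lhs => rw [hdec, List.foldl_append]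
        have h1 : ∀ (v : Fin d'), ∀ j ∈ (List.finRange n).take (e+1),
            M.T j (inp i m (M.ord j)) v = M.T j (r i 0 j) v := by
          intro v j hj
          have := WH.mem_take j hj
          have : inp i m (M.ord j) = r i 0 j := by
            simp only [hinp, Equiv.symm_apply_apply, hr, decide_eq_decide]
            omega
          rw [this]
        have h2 : ∀ (v : Fin d'), ∀ j ∈ (List.finRange n).drop (e+1),
            M.T j (inp i m (M.ord j)) v = M.T j (r i m j) v := by
          intro v j hj
          show M.T j (r i m (M.ord.symm (M.ord j))) v = _
          rw [Equiv.symm_apply_apply]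
        rw [List.foldl_ext _ _ _ h1, List.foldl_ext _ _ _ h2]
      -- the two runs are equal
      have hxle : x.val ≤ e + 1 := le_of_lt x.isLt
      have hyle : y.val ≤ e + 1 := le_of_lt y.isLt
      have hruns : M.run (inp x.val m) = M.run (inp y.val m) := by
        rw [hsplit x.val hxle, hsplit y.val hyle]
        have hmid : ((List.finRange n).take (e+1)).foldl (fun v j => M.T j (r x.val 0 j) v) M.start
            = ((List.finRange n).take (e+1)).foldl (fun v j => M.T j (r y.val 0 j) v) M.start :=
          hFxy
        rw [hmid]
        apply List.foldl_ext
        intro v j hj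
        have := WH.mem_drop j hj
        have hx' : x.val < e + 1 := x.isLt
        have hy' : y.val < e + 1 := y.isLt
        have hrr : r x.val m j = r y.val m j := by
          simp only [hr, decide_eq_decide]
          omega
        rw [hrr]
      -- counts differ mod e+1
      have hmn : (e+1) + m ≤ n := by omega
      have hcx : countOnes (inp x.val m) = e + 1 := by
        rw [hcount x.val m hxle hmn]; omega
      have hcy : countOnes (inp y.val m) = y.val + m := hcount y.val m hyle hmn
      have hfx : f (inp x.val m) = true := by
        simp [hf, MODf, hcx]
      have hx' : x.val < e + 1 := x.isLt
      have hy' : y.val < e + 1 := y.isLt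
      have hne : x.val ≠ y.val := fun h => hxy (Fin.ext h)
      have hfy : f (inp y.val m) = false := by
        simp only [hf, MODf, hcy]
        rw [decide_eq_false_iff_not]
        intro h0
        obtain ⟨k, hk⟩ := Nat.dvd_of_mod_eq_zero h0
        rcases k with _ | _ | k
        · omega
        · omega
        · have h2k : (e+1) * 2 ≤ (e+1) * (k+1+1) := Nat.mul_le_mul_left (e+1) (by omega)
          omega
      have hA := (hM (inp x.val m)).2 hfx
      have hB := hM (inp y.val m)
      rw [DOBDD.accepts, ← hruns] at hB
      rw [hB.1 hA] at hfy
      simp at hfy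
  have he : e + 1 - 1 = e := rfl
  rw [he]
  have hsub : OBDDclass n e ⊆ OBDDclass n (e+1) := by
    rintro g ⟨d', hd', M, hM⟩
    exact ⟨d', by omega, M, hM⟩
  refine ⟨⟨f, key.1, key.2⟩, ?_⟩
  rw [Set.ssubset_def]
  exact ⟨hsub, fun hc => key.2 (hc key.1)⟩
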